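/- Let n ≥ 3, 2 ≤ k ≤ n, and let ξ satisfy 0 < 1 - ξ'², the radial σ_k-Yamabe ODE, and the first integral e^((2k-n)ξ)(1-ξ'²)^k = e^(-nξ) + h. Set V(t) = e^((1 - n/(2k))ξ(t))·(e^(-nξ(t)) + h)^((k-1)/(2k)). Then 2·V'(t)/V(t) = [1 - (n-1)·C(t)/A(t)]·ξ'(t), where A and C are as in the linearized operator; i.e. the substitution ψ = Vφ eliminates the first-order term of L_j. -/

import Mathlib

set_option maxHeartbeats 1000000


/-- With `V(t) = e^((1-n/(2k))ξ(t))·(e^(-nξ(t))+h)^((k-1)/(2k))`, one has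
`2V'/V = [1 - (n-1)C/A]·ξ'`, i.e. the substitution `ψ = Vφ` eliminates the
first-order term of the linearized σ_k-Yamabe operator. -/
theorem V_eliminates_first_order_term (n k : ℕ) (hn : 3 ≤ n) (hk : 2 ≤ k)
    (hkn : k ≤ n) (h : ℝ) (ξ : ℝ → ℝ) (hξ : ContDiff ℝ 2 ξ)
    (hpos : ∀ t, 0 < 1 - (deriv ξ t) ^ 2)
    (hode : ∀ t, deriv (deriv ξ) t
      = (n : ℝ) / (2 * k) * Real.exp (-2 * k * ξ t)
          * (1 - (deriv ξ t) ^ 2) ^ ((1 : ℝ) - k)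
        - ((n : ℝ) - 2 * k) / (2 * k) * (1 - (deriv ξ t) ^ 2))
    (hfi : ∀ t, Real.exp ((2 * (k : ℝ) - n) * ξ t) * (1 - (deriv ξ t) ^ 2) ^ k
      = Real.exp (-(n : ℝ) * ξ t) + h) :
    ∀ t,
      2 * deriv (fun s => Real.exp ((1 - (n : ℝ) / (2 * k)) * ξ s)
            * (Real.exp (-(n : ℝ) * ξ s) + h) ^ (((k : ℝ) - 1) / (2 * k))) t
        / (Real.exp ((1 - (n : ℝ) / (2 * k)) * ξ t)
            * (Real.exp (-(n : ℝ) * ξ t) + h) ^ (((k : ℝ) - 1) / (2 * k)))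
      = (1 - ((n : ℝ) - 1) *
          ((((k : ℝ) - 1) / ((n : ℝ) - 1) * deriv (deriv ξ) t
              + ((n : ℝ) - 2 * k + 1) / ((n : ℝ) - 1) * (1 - (deriv ξ t) ^ 2) / 2)
            / ((1 - (deriv ξ t) ^ 2) / 2))) * deriv ξ t := by
  intro t
  have hξd : Differentiable ℝ ξ := hξ.differentiable two_ne_zero
  have hξt : HasDerivAt ξ (deriv ξ t) t := (hξd t).hasDerivAt
  set u := deriv ξ t with hu
  have hQ : 0 < 1 - u ^ 2 := hpos t
  have hP : 0 < Real.exp (-(n : ℝ) * ξ t) + h := by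
    rw [← hfi t]
    positivity
  have hPne : Real.exp (-(n : ℝ) * ξ t) + h ≠ 0 := ne_of_gt hP
  set E := Real.exp (-(n : ℝ) * ξ t) with hE
  set c : ℝ := ((k : ℝ) - 1) / (2 * k) with hc
  set a : ℝ := 1 - (n : ℝ) / (2 * k) with ha
  -- derivative of V
  have h2 : HasDerivAt (fun s => Real.exp (a * ξ s))
      (Real.exp (a * ξ t) * (a * u)) t := (hξt.const_mul a).exp
  have h4 : HasDerivAt (fun s => Real.exp (-(n : ℝ) * ξ s))
      (E * (-(n : ℝ) * u)) t := (hξt.const_mul (-(n:ℝ))).exp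
  have h5 : HasDerivAt (fun s => Real.exp (-(n : ℝ) * ξ s) + h)
      (E * (-(n : ℝ) * u)) t := h4.add_const h
  have h6 : HasDerivAt (fun s => (Real.exp (-(n : ℝ) * ξ s) + h) ^ c)
      (E * (-(n : ℝ) * u) * c * (E + h) ^ (c - 1)) t :=
    h5.rpow_const (Or.inl hPne)
  have h7 : HasDerivAt (fun s => Real.exp (a * ξ s)
        * (Real.exp (-(n : ℝ) * ξ s) + h) ^ c)
      (Real.exp (a * ξ t) * (a * u) * (E + h) ^ c
        + Real.exp (a * ξ t) * (E * (-(n : ℝ) * u) * c * (E + h) ^ (c - 1))) t :=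
    h2.mul h6
  rw [h7.deriv]
  have hexp : Real.exp (a * ξ t) ≠ 0 := Real.exp_ne_zero _
  have hrp : (0:ℝ) < (E + h) ^ c := Real.rpow_pos_of_pos hP c
  have hsub : (E + h) ^ (c - 1) = (E + h) ^ c / (E + h) := by
    rw [Real.rpow_sub hP, Real.rpow_one]
  -- key identity from the first integral
  have hk0 : (k : ℝ) ≠ 0 := by positivity
  have hQk : (1 - u ^ 2) ^ k = (E + h) / Real.exp ((2 * (k : ℝ) - n) * ξ t) := by
    rw [← hfi t]
    field_simp
    rfl
  have hmul : Real.exp (-2 * (k:ℝ) * ξ t) * Real.exp ((2 * (k : ℝ) - n) * ξ t)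
      = E := by
    rw [← Real.exp_add, hE]
    congr 1
    ring
  have key : Real.exp (-2 * k * ξ t) * (1 - u ^ 2) ^ ((1 : ℝ) - k)
      = E / (E + h) * (1 - u ^ 2) := by
    rw [show ((1:ℝ) - k) = (1:ℝ) - (k:ℕ) by push_cast; ring,
      Real.rpow_sub hQ, Real.rpow_one, Real.rpow_natCast, hQk]
    have hex : Real.exp ((2 * (k : ℝ) - n) * ξ t) ≠ 0 := Real.exp_ne_zero _
    field_simp
    ring_nf
    ring_nf at hmul
    linear_combination hmul
  have hode' : deriv (deriv ξ) t
      = (n : ℝ) / (2 * k) * (E / (E + h) * (1 - u ^ 2))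
        - ((n : ℝ) - 2 * k) / (2 * k) * (1 - u ^ 2) := by
    rw [hode t, ← hu, mul_assoc, key]
  rw [hode', hsub]
  have hn1 : (n : ℝ) - 1 ≠ 0 := by
    have : (3:ℝ) ≤ n := by exact_mod_cast hn
    linarith
  have hQne : (1 - u ^ 2) ≠ 0 := ne_of_gt hQ
  set X := Real.exp (a * ξ t) with hX
  set Pc := (E + h) ^ c with hPc
  have hPcne : Pc ≠ 0 := ne_of_gt hrp
  clear_value X Pc
  have main : 2 * (X * (a * u) * Pc + X * (E * (-(n:ℝ) * u) * c * (Pc / (E + h)))) / (X * Pc)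
      = (2 * a - 2 * (n:ℝ) * c * (E / (E + h))) * u := by
    field_simp
    ring
  rw [main, ha, hc]
  have hk2 : (2 * (k:ℝ)) ≠ 0 := by positivity
  field_simp
  ring
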